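/- Let η > 0, let t_k < t_{k+1} ≤ t_{k+C} be real instants, let x_z : [t_k, t_{k+C}] → ℝ and x_z^M : [t_k, t_{k+C}] → ℝ be continuous with x_z(τ) ≤ x_z^M(τ) for all τ ∈ [t_k, t_{k+C}], and let x̃_z : [t_{k+C}, ∞) → ℝ be measurable with |x̃_z(τ)| ≤ a + b·τ for constants a, b ≥ 0. Let x_u : [t_k, t_{k+1}] → ℝ be differentiable with x_u'(t) = η(x_u(t) − x_z(t)) and initial condition x_u(t_k) = η ∫_{t_k}^{t_{k+C}} e^{−η(τ−t_k)} x_z(τ) dτ + η ∫_{t_{k+C}}^∞ e^{−η(τ−t_k)} x̃_z(τ) dτ. Then x_u(t_{k+1}) ≤ η ∫_{t_{k+1}}^{t_{k+C}} e^{−η(τ−t_{k+1})} x_z^M(τ) dτ + η ∫_{t_{k+C}}^∞ e^{−η(τ−t_{k+1})} x̃_z(τ) dτ. -/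

import Mathlib

open MeasureTheory Real intervalIntegral

/-- key step in the recursive feasibility proof. If `x_u' = η(x_u − x_z)` on
`[t_k, t_{k+1}]` with the stability-constrained initial condition at `t_k` (discounted
integral of the planned ZMP `x_z` over `[t_k, t_{k+C}]` plus that of the tail `x̃_z` after
`t_{k+C}`), and `x_z ≤ x_z^M` on `[t_k, t_{k+C}]`, then
`x_u(t_{k+1}) ≤ η ∫_{t_{k+1}}^{t_{k+C}} e^{−η(τ−t_{k+1})} x_z^M dτ
   + η ∫_{t_{k+C}}^∞ e^{−η(τ−t_{k+1})} x̃_z dτ`. -/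
theorem stmt_16 (η tk tk1 tkC a b : ℝ) (hη : 0 < η)
    (hlt : tk < tk1) (hle : tk1 ≤ tkC) (ha : 0 ≤ a) (hb : 0 ≤ b)
    (xz xzM : ℝ → ℝ)
    (hxz : ContinuousOn xz (Set.Icc tk tkC))
    (hxzM : ContinuousOn xzM (Set.Icc tk tkC))
    (hub : ∀ τ ∈ Set.Icc tk tkC, xz τ ≤ xzM τ)
    (tail : ℝ → ℝ) (htail : Measurable tail)
    (htailgrowth : ∀ τ, tkC ≤ τ → |tail τ| ≤ a + b * τ)
    (xu : ℝ → ℝ)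
    (hode : ∀ t ∈ Set.Icc tk tk1,
      HasDerivWithinAt xu (η * (xu t - xz t)) (Set.Icc tk tk1) t)
    (hinit : xu tk = (η * ∫ τ in tk..tkC, Real.exp (-η * (τ - tk)) * xz τ)
        + η * ∫ τ in Set.Ioi tkC, Real.exp (-η * (τ - tk)) * tail τ) :
    xu tk1 ≤ (η * ∫ τ in tk1..tkC, Real.exp (-η * (τ - tk1)) * xzM τ)
        + η * ∫ τ in Set.Ioi tkC, Real.exp (-η * (τ - tk1)) * tail τ := by
  have hsub : Set.Icc tk tk1 ⊆ Set.Icc tk tkC :=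
    Set.Icc_subset_Icc le_rfl hle
  have hsub' : Set.Icc tk1 tkC ⊆ Set.Icc tk tkC :=
    Set.Icc_subset_Icc hlt.le le_rfl
  -- rescaling of tail integrals
  have hT : ∀ s : ℝ, (∫ τ in Set.Ioi tkC, Real.exp (-η * (τ - s)) * tail τ)
      = Real.exp (η * s) * ∫ τ in Set.Ioi tkC, Real.exp (-η * τ) * tail τ := by
    intro s
    rw [← MeasureTheory.integral_const_mul]
    refine integral_congr_ae (Filter.Eventually.of_forall fun τ => ?_)
    dsimp only
    rw [← mul_assoc, ← Real.exp_add]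
    have : -η * (τ - s) = η * s + -η * τ := by ring
    rw [this]
  -- rescaling of interval integrals
  have hI : ∀ (s u v : ℝ) (f : ℝ → ℝ),
      (∫ τ in u..v, Real.exp (-η * (τ - s)) * f τ)
      = Real.exp (η * s) * ∫ τ in u..v, Real.exp (-η * τ) * f τ := by
    intro s u v f
    rw [← intervalIntegral.integral_const_mul]
    refine intervalIntegral.integral_congr fun τ _ => ?_
    rw [← mul_assoc, ← Real.exp_add]
    have : -η * (τ - s) = η * s + -η * τ := by ring
    rw [this]
  set A := ∫ τ in tk..tk1, Real.exp (-η * τ) * xz τ with hA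
  set B := ∫ τ in tk1..tkC, Real.exp (-η * τ) * xz τ with hB
  set BM := ∫ τ in tk1..tkC, Real.exp (-η * τ) * xzM τ with hBM
  set T := ∫ τ in Set.Ioi tkC, Real.exp (-η * τ) * tail τ with hTdef
  -- integrability facts
  have hcz : ContinuousOn (fun τ => Real.exp (-η * τ) * xz τ) (Set.Icc tk tkC) :=
    (Continuous.continuousOn (by continuity)).mul hxz
  have hczM : ContinuousOn (fun τ => Real.exp (-η * τ) * xzM τ) (Set.Icc tk tkC) :=
    (Continuous.continuousOn (by continuity)).mul hxzM
  have hintA : IntervalIntegrable (fun τ => Real.exp (-η * τ) * xz τ) volume tk tk1 := by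
    apply ContinuousOn.intervalIntegrable
    rw [Set.uIcc_of_le hlt.le]
    exact hcz.mono hsub
  have hintB : IntervalIntegrable (fun τ => Real.exp (-η * τ) * xz τ) volume tk1 tkC := by
    apply ContinuousOn.intervalIntegrable
    rw [Set.uIcc_of_le hle]
    exact hcz.mono hsub'
  have hintBM : IntervalIntegrable (fun τ => Real.exp (-η * τ) * xzM τ) volume tk1 tkC := by
    apply ContinuousOn.intervalIntegrable
    rw [Set.uIcc_of_le hle]
    exact hczM.mono hsub'
  -- split: ∫_{tk}^{tkC} = A + B
  have hsplit : (∫ τ in tk..tkC, Real.exp (-η * τ) * xz τ) = A + B :=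
    (intervalIntegral.integral_add_adjacent_intervals hintA hintB).symm
  -- the auxiliary function h
  set h : ℝ → ℝ := fun t => Real.exp (-η * t) * xu t with hh
  have hderiv : ∀ t ∈ Set.Icc tk tk1,
      HasDerivWithinAt h (-η * (Real.exp (-η * t) * xz t)) (Set.Icc tk tk1) t := by
    intro t ht
    have he : HasDerivWithinAt (fun t => Real.exp (-η * t))
        (Real.exp (-η * t) * (-η)) (Set.Icc tk tk1) t := by
      have hlin : HasDerivAt (fun x : ℝ => -η * x) (-η) t := by
        simpa using (hasDerivAt_id t).const_mul (-η)
      simpa using hlin.exp.hasDerivWithinAt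
    have : HasDerivWithinAt h (Real.exp (-η * t) * (-η) * xu t + Real.exp (-η * t) * (η * (xu t - xz t)))
        (Set.Icc tk tk1) t := he.fun_mul (hode t ht)
    convert this using 1
    ring
  have hcont : ContinuousOn h (Set.Icc tk tk1) := fun t ht =>
    (hderiv t ht).continuousWithinAt
  have hftc : (∫ τ in tk..tk1, -η * (Real.exp (-η * τ) * xz τ)) = h tk1 - h tk := by
    apply intervalIntegral.integral_eq_sub_of_hasDeriv_right_of_le hlt.le hcont
    · intro x hx
      exact (hderiv x (Set.Ioo_subset_Icc_self hx)).mono_of_mem_nhdsWithin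
        (Icc_mem_nhdsGT_of_mem ⟨hx.1.le, hx.2⟩)
    · exact hintA.const_mul (-η)
  rw [intervalIntegral.integral_const_mul] at hftc
  -- compute h tk
  have hhtk : h tk = η * (A + B) + η * T := by
    simp only [hh]
    rw [hinit, hI tk tk tkC xz, hT tk, hsplit]
    have hex : Real.exp (-η * tk) * Real.exp (η * tk) = 1 := by
      rw [← Real.exp_add]; simp
    linear_combination (η * (A + B) + η * T) * hex
  have hhtk1 : h tk1 = η * B + η * T := by
    have : h tk1 = h tk + -η * A := by linarith [hftc]
    rw [this, hhtk]; ring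
  -- value of xu at tk1
  have hxutk1 : xu tk1 = η * (Real.exp (η * tk1) * B) + η * (Real.exp (η * tk1) * T) := by
    have h1 : Real.exp (η * tk1) * h tk1 = xu tk1 := by
      simp only [hh]
      have hex : Real.exp (η * tk1) * Real.exp (-η * tk1) = 1 := by
        rw [← Real.exp_add]; simp
      linear_combination (xu tk1) * hex
    rw [← h1, hhtk1]; ring
  -- compare B with BM
  have hBle : B ≤ BM := by
    apply intervalIntegral.integral_mono_on hle hintB hintBM
    intro τ hτ
    have hτ' : τ ∈ Set.Icc tk tkC := hsub' hτ
    exact mul_le_mul_of_nonneg_left (hub τ hτ') (Real.exp_nonneg _)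
  rw [hxutk1, hI tk1 tk1 tkC xzM, hT tk1]
  have := mul_le_mul_of_nonneg_left
    (mul_le_mul_of_nonneg_left hBle (Real.exp_nonneg (η * tk1))) hη.le
  linarith
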